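/- Let f = h + conj(g) be a sense-preserving harmonic mapping on the unit disk 𝔻 (so |g′(z)| < |h′(z)| for all z ∈ 𝔻) with dilatation ω = g′/h′ satisfying ‖ω‖_∞ := sup_{z ∈ 𝔻} |ω(z)| < 1. If h is a starlike function (analytic, univalent on 𝔻, h(0) = 0, with h(𝔻) starlike with respect to 0), then f is normal, i.e. ‖f‖_n < ∞. -/

import Mathlib

open Complex Metric Set ENNReal Filter Topology

noncomputable section

/-- The open unit disk in the complex plane. -/
def unitDisk : Set ℂ := Metric.ball (0 : ℂ) 1

notation "𝔻" => unitDisk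

/-- The chordal distance on ℂ. -/
def chordal (z w : ℂ) : ℝ :=
  ‖z - w‖ /
    (Real.sqrt (1 + ‖z‖ ^ 2) * Real.sqrt (1 + ‖w‖ ^ 2))

/-- The hyperbolic distance on the unit disk. -/
def hypDist (z w : ℂ) : ℝ :=
  (1 / 2) * Real.log
    ((1 + ‖(z - w) / (1 - (starRingEnd ℂ) z * w)‖) /
     (1 - ‖(z - w) / (1 - (starRingEnd ℂ) z * w)‖))

/-- The harmonic mapping `f = h + conj g`. -/
def harmMap (h g : ℂ → ℂ) : ℂ → ℂ := fun z => h z + (starRingEnd ℂ) (g z)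

/-- The quantity `(1 - |z|²) (|h'(z)| + |g'(z)|) / (1 + |f(z)|²)` for `f = h + conj g`. -/
def nQuot (h g : ℂ → ℂ) (z : ℂ) : ℝ :=
  (1 - ‖z‖ ^ 2) * (‖deriv h z‖ + ‖deriv g z‖) /
    (1 + ‖harmMap h g z‖ ^ 2)

/-- `‖f‖ₙ`, the normality norm of the harmonic mapping `f = h + conj g`,
as an element of `[0, ∞]`. -/
def harmNorm (h g : ℂ → ℂ) : ℝ≥0∞ :=
  ⨆ z ∈ 𝔻, ENNReal.ofReal (nQuot h g z)

/-- `φ` is a conformal automorphism of the unit disk. -/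
def IsDiskAut (φ : ℂ → ℂ) : Prop :=
  DifferentiableOn ℂ φ 𝔻 ∧ Set.MapsTo φ 𝔻 𝔻 ∧
    ∃ ψ : ℂ → ℂ, DifferentiableOn ℂ ψ 𝔻 ∧ Set.MapsTo ψ 𝔻 𝔻 ∧
      (∀ z ∈ 𝔻, ψ (φ z) = z) ∧ (∀ z ∈ 𝔻, φ (ψ z) = z)

set_option maxHeartbeats 1000000

namespace NormalAux


lemma mem_disk {z : ℂ} : z ∈ 𝔻 ↔ ‖z‖ < 1 := by
  rw [unitDisk, mem_ball_zero_iff]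

lemma isOpen_disk : IsOpen 𝔻 := isOpen_ball

def mob (p z : ℂ) : ℂ := (z - p) / (1 - (starRingEnd ℂ) p * z)

lemma normSq_lt_one {p : ℂ} (hp : ‖p‖ < 1) : Complex.normSq p < 1 := by
  rw [← Complex.sq_norm]; nlinarith [norm_nonneg p]

lemma mob_den_ne {p z : ℂ} (hp : ‖p‖ < 1) (hz : ‖z‖ < 1) :
    1 - (starRingEnd ℂ) p * z ≠ 0 := by
  intro e
  have h1 : (starRingEnd ℂ) p * z = 1 := by linear_combination -e
  have := congrArg (‖·‖) h1
  rw [norm_mul, Complex.norm_conj, norm_one] at this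
  nlinarith [norm_nonneg p, norm_nonneg z]

lemma mob_key {p z : ℂ} :
    Complex.normSq (1 - (starRingEnd ℂ) p * z) - Complex.normSq (z - p)
      = (1 - Complex.normSq p) * (1 - Complex.normSq z) := by
  simp [Complex.normSq_apply, Complex.sub_re, Complex.sub_im, Complex.mul_re, Complex.mul_im]
  ring

lemma mob_maps {p z : ℂ} (hp : ‖p‖ < 1) (hz : ‖z‖ < 1) :
    ‖mob p z‖ < 1 := by
  have hden := mob_den_ne hp hz
  have hdenpos : 0 < ‖1 - (starRingEnd ℂ) p * z‖ := norm_pos_iff.mpr hden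
  rw [mob, norm_div, div_lt_one hdenpos]
  have key : Complex.normSq (z - p) < Complex.normSq (1 - (starRingEnd ℂ) p * z) := by
    have := mob_key (p := p) (z := z)
    nlinarith [normSq_lt_one hp, normSq_lt_one hz]
  have h1 : ‖z - p‖ ^ 2 < ‖1 - (starRingEnd ℂ) p * z‖ ^ 2 := by
    rwa [Complex.sq_norm, Complex.sq_norm]
  exact lt_of_pow_lt_pow_left₀ 2 (norm_nonneg _) h1

lemma hasDerivAt_mob {p z : ℂ} (hden : 1 - (starRingEnd ℂ) p * z ≠ 0) :
    HasDerivAt (mob p) ((1 - (starRingEnd ℂ) p * p) / (1 - (starRingEnd ℂ) p * z) ^ 2) z := by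
  have h1 : HasDerivAt (fun w : ℂ => w - p) 1 z := (hasDerivAt_id z).sub_const p
  have h2 : HasDerivAt (fun w : ℂ => 1 - (starRingEnd ℂ) p * w) (-((starRingEnd ℂ) p)) z := by
    simpa using ((hasDerivAt_id z).const_mul ((starRingEnd ℂ) p)).const_sub 1
  have := h1.div h2 hden
  rw [show (1 - (starRingEnd ℂ) p * p) / (1 - (starRingEnd ℂ) p * z) ^ 2 =
    (1 * (1 - (starRingEnd ℂ) p * z) - (z - p) * -(starRingEnd ℂ) p) /
      (1 - (starRingEnd ℂ) p * z) ^ 2 by ring]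
  exact this

lemma abs_one_sub_conj_mul_self {z : ℂ} (hz : ‖z‖ < 1) :
    ‖1 - (starRingEnd ℂ) z * z‖ = 1 - ‖z‖ ^ 2 := by
  have : (starRingEnd ℂ) z * z = (Complex.normSq z : ℂ) := by
    rw [mul_comm, Complex.mul_conj]
  rw [this, ← Complex.ofReal_one, ← Complex.ofReal_sub, Complex.norm_real,
    Real.norm_of_nonneg (by nlinarith [normSq_lt_one hz]), ← Complex.sq_norm]

/-- Schwarz–Pick lemma. -/
lemma schwarzPick {ψ : ℂ → ℂ} (hd : DifferentiableOn ℂ ψ 𝔻) (hm : MapsTo ψ 𝔻 𝔻)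
    {z₀ : ℂ} (hz₀ : z₀ ∈ 𝔻) :
    (1 - ‖z₀‖ ^ 2) * ‖deriv ψ z₀‖ ≤ 1 - ‖ψ z₀‖ ^ 2 := by
  have hz₀' : ‖z₀‖ < 1 := mem_disk.mp hz₀
  have hw₀' : ‖ψ z₀‖ < 1 := mem_disk.mp (hm hz₀)
  have hmp : ‖-z₀‖ < 1 := by simpa using hz₀'
  set F : ℂ → ℂ := mob (ψ z₀) ∘ ψ ∘ mob (-z₀) with hF
  have hσ0 : mob (-z₀) 0 = z₀ := by simp [mob]
  have hF0 : F 0 = 0 := by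
    show mob (ψ z₀) (ψ (mob (-z₀) 0)) = 0
    rw [hσ0, mob, sub_self, zero_div]
  -- differentiability and mapsto
  have hFd : DifferentiableOn ℂ F 𝔻 := by
    intro ζ hζ
    have hζ' : ‖ζ‖ < 1 := mem_disk.mp hζ
    have d1 := (hasDerivAt_mob (mob_den_ne hmp hζ')).differentiableAt
    have hσζ : mob (-z₀) ζ ∈ 𝔻 := mem_disk.mpr (mob_maps hmp hζ')
    have d2 : DifferentiableAt ℂ ψ (mob (-z₀) ζ) :=
      hd.differentiableAt (isOpen_disk.mem_nhds hσζ)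
    have hψσ : ‖ψ (mob (-z₀) ζ)‖ < 1 := mem_disk.mp (hm hσζ)
    have d3 := (hasDerivAt_mob (mob_den_ne hw₀' hψσ)).differentiableAt
    exact ((d3.comp ζ (d2.comp ζ d1))).differentiableWithinAt
  have hFm : MapsTo F 𝔻 𝔻 := by
    intro ζ hζ
    have hζ' : ‖ζ‖ < 1 := mem_disk.mp hζ
    exact mem_disk.mpr (mob_maps hw₀'
      (mem_disk.mp (hm (mem_disk.mpr (mob_maps hmp hζ')))))
  have hs : ‖deriv F 0‖ ≤ 1 := by
    have := Complex.norm_deriv_le_div_of_mapsTo_ball (R₁ := 1) (R₂ := 1) hFd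
      (by rw [hF0]; exact hFm.mono_right ball_subset_closedBall) one_pos
    simpa using this
  -- compute deriv F 0
  have Hψ : HasDerivAt ψ (deriv ψ z₀) z₀ :=
    (hd.differentiableAt (isOpen_disk.mem_nhds hz₀)).hasDerivAt
  have H1 : HasDerivAt (mob (-z₀))
      ((1 - (starRingEnd ℂ) (-z₀) * (-z₀)) / (1 - (starRingEnd ℂ) (-z₀) * 0) ^ 2) 0 :=
    hasDerivAt_mob (by simpa using (one_ne_zero : (1:ℂ) ≠ 0))
  have Hψ' : HasDerivAt ψ (deriv ψ z₀) (mob (-z₀) 0) := by rw [hσ0]; exact Hψ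
  have H2 := Hψ'.comp 0 H1
  have H3 : HasDerivAt (mob (ψ z₀))
      ((1 - (starRingEnd ℂ) (ψ z₀) * (ψ z₀)) / (1 - (starRingEnd ℂ) (ψ z₀) * (ψ z₀)) ^ 2)
      ((ψ ∘ mob (-z₀)) 0) := by
    have : (ψ ∘ mob (-z₀)) 0 = ψ z₀ := by simp [hσ0]
    rw [this]
    exact hasDerivAt_mob (mob_den_ne hw₀' hw₀')
  have HF := H3.comp 0 H2
  have hder : deriv F 0 =
      (1 - (starRingEnd ℂ) (ψ z₀) * (ψ z₀)) / (1 - (starRingEnd ℂ) (ψ z₀) * (ψ z₀)) ^ 2 *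
        (deriv ψ z₀ * ((1 - (starRingEnd ℂ) (-z₀) * (-z₀)) / (1 - (starRingEnd ℂ) (-z₀) * 0) ^ 2)) :=
    HF.deriv
  rw [hder] at hs
  -- simplify
  have e1 : (starRingEnd ℂ) (-z₀) * (-z₀) = (starRingEnd ℂ) z₀ * z₀ := by rw [map_neg]; ring
  rw [e1] at hs
  have hb : ‖1 - (starRingEnd ℂ) (ψ z₀) * (ψ z₀)‖ = 1 - ‖ψ z₀‖ ^ 2 :=
    abs_one_sub_conj_mul_self hw₀'
  have ha : ‖1 - (starRingEnd ℂ) z₀ * z₀‖ = 1 - ‖z₀‖ ^ 2 :=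
    abs_one_sub_conj_mul_self hz₀'
  have hbpos : 0 < 1 - ‖ψ z₀‖ ^ 2 := by nlinarith [norm_nonneg (ψ z₀)]
  rw [norm_mul, norm_mul, norm_div, norm_div, norm_pow, norm_pow] at hs
  simp only [mul_zero, sub_zero, norm_one, one_pow, div_one] at hs
  rw [hb, ha] at hs
  calc (1 - ‖z₀‖ ^ 2) * ‖deriv ψ z₀‖
      = ((1 - ‖ψ z₀‖ ^ 2) / (1 - ‖ψ z₀‖ ^ 2) ^ 2 *
          (‖deriv ψ z₀‖ * (1 - ‖z₀‖ ^ 2))) * (1 - ‖ψ z₀‖ ^ 2) := by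
        field_simp
    _ ≤ 1 * (1 - ‖ψ z₀‖ ^ 2) := by
        apply mul_le_mul_of_nonneg_right hs (le_of_lt hbpos)
    _ = 1 - ‖ψ z₀‖ ^ 2 := one_mul _



lemma re_cpow_half_pos {q : ℂ} (hq : q ∈ Complex.slitPlane) : 0 < (q ^ (1/2 : ℂ)).re := by
  have hq0 : q ≠ 0 := Complex.slitPlane_ne_zero hq
  rw [Complex.cpow_def_of_ne_zero hq0, Complex.exp_re]
  have him : (Complex.log q * (1/2 : ℂ)).im = q.arg / 2 := by
    simp [Complex.mul_im, Complex.log_im]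
    ring
  rw [him]
  have h1 : -(Real.pi/2) < q.arg / 2 := by linarith [Complex.neg_pi_lt_arg q]
  have h2 : q.arg / 2 < Real.pi/2 := by
    have := Complex.arg_le_pi q
    have hne := Complex.slitPlane_arg_ne_pi hq
    have : q.arg < Real.pi := lt_of_le_of_ne this hne
    linarith
  exact mul_pos (Real.exp_pos _) (Real.cos_pos_of_mem_Ioo ⟨h1, h2⟩)

lemma sq_cpow_half {q : ℂ} (hq0 : q ≠ 0) : q ^ (1/2 : ℂ) * q ^ (1/2 : ℂ) = q := by
  rw [← Complex.cpow_add _ _ hq0]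
  norm_num

lemma add_one_ne {u : ℂ} (hu : 0 < u.re) : u + 1 ≠ 0 := by
  intro e
  have : (u + 1).re = 0 := by rw [e]; simp
  simp [Complex.add_re] at this
  linarith

lemma abs_phi_lt_one {u : ℂ} (hu : 0 < u.re) : ‖(u - 1)/(u + 1)‖ < 1 := by
  have h1 : u + 1 ≠ 0 := add_one_ne hu
  rw [norm_div, div_lt_one (norm_pos_iff.mpr h1)]
  have key : ‖u - 1‖ ^ 2 < ‖u + 1‖ ^ 2 := by
    rw [Complex.sq_norm, Complex.sq_norm]
    simp [Complex.normSq_apply, Complex.add_re, Complex.add_im, Complex.sub_re, Complex.sub_im]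
    nlinarith
  exact lt_of_pow_lt_pow_left₀ 2 (norm_nonneg _) key

lemma one_sub_sq_phi {u : ℂ} (hu : 0 < u.re) :
    1 - ‖(u - 1)/(u + 1)‖ ^ 2 = 4 * u.re / ‖u + 1‖ ^ 2 := by
  have h1 : u + 1 ≠ 0 := add_one_ne hu
  have h2 : ‖u + 1‖ ^ 2 ≠ 0 := pow_ne_zero 2 (norm_ne_zero_iff.mpr h1)
  rw [norm_div, div_pow, eq_div_iff h2, sub_mul, div_mul_cancel₀ _ h2, one_mul]
  rw [Complex.sq_norm, Complex.sq_norm]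
  simp [Complex.normSq_apply, Complex.add_re, Complex.add_im, Complex.sub_re, Complex.sub_im]
  ring

lemma starlike_deriv_bound {h : ℂ → ℂ} (hh : DifferentiableOn ℂ h 𝔻) {a : ℂ} (ha0 : a ≠ 0)
    (hray : ∀ z ∈ 𝔻, 1 - h z / a ∈ Complex.slitPlane) {z₀ : ℂ} (hz₀ : z₀ ∈ 𝔻) :
    (1 - ‖z₀‖ ^ 2) * ‖deriv h z₀‖ ≤
      (4 * ‖a‖ + 2) * (1 + ‖h z₀‖ ^ 2) := by
  set q : ℂ → ℂ := fun z => 1 - h z / a with hqdef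
  set u : ℂ → ℂ := fun z => q z ^ (1/2 : ℂ) with hudef
  set φ : ℂ → ℂ := fun z => (u z - 1) / (u z + 1) with hφdef
  have hure : ∀ z ∈ 𝔻, 0 < (u z).re := fun z hz => re_cpow_half_pos (hray z hz)
  have hq0 : ∀ z ∈ 𝔻, q z ≠ 0 := fun z hz => Complex.slitPlane_ne_zero (hray z hz)
  have hu1 : ∀ z ∈ 𝔻, u z + 1 ≠ 0 := fun z hz => add_one_ne (hure z hz)
  have hu0 : ∀ z ∈ 𝔻, u z ≠ 0 := by
    intro z hz e
    have := hure z hz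
    rw [e] at this
    simp at this
  have Hφ : ∀ z ∈ 𝔻, HasDerivAt φ
      (((1/2 : ℂ) * q z ^ ((1/2:ℂ) - 1) * (-(deriv h z / a)) * (u z + 1) -
        (u z - 1) * ((1/2 : ℂ) * q z ^ ((1/2:ℂ) - 1) * (-(deriv h z / a)))) / (u z + 1) ^ 2) z := by
    intro z hz
    have Hh : HasDerivAt h (deriv h z) z :=
      (hh.differentiableAt (isOpen_disk.mem_nhds hz)).hasDerivAt
    have Hq : HasDerivAt q (-(deriv h z / a)) z := by
      simpa using (Hh.div_const a).const_sub 1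
    have Hu : HasDerivAt u ((1/2 : ℂ) * q z ^ ((1/2:ℂ) - 1) * (-(deriv h z / a))) z :=
      Hq.cpow_const (hray z hz)
    exact (Hu.sub_const 1).div (Hu.add_const 1) (hu1 z hz)
  have hφd : DifferentiableOn ℂ φ 𝔻 := fun z hz =>
    (Hφ z hz).differentiableAt.differentiableWithinAt
  have hφm : MapsTo φ 𝔻 𝔻 := fun z hz => mem_disk.mpr (abs_phi_lt_one (hure z hz))
  have SP := schwarzPick hφd hφm hz₀
  have hval : deriv φ z₀ = -(deriv h z₀) / (a * u z₀ * (u z₀ + 1) ^ 2) := by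
    rw [(Hφ z₀ hz₀).deriv]
    have e1 : q z₀ ^ ((1/2:ℂ) - 1) = (u z₀)⁻¹ := by
      rw [show ((1:ℂ)/2 - 1) = -(1/2) by norm_num, Complex.cpow_neg]
    rw [e1]
    have h1 := hu0 z₀ hz₀
    have h2 := hu1 z₀ hz₀
    have hden1 : (u z₀ + 1) ^ 2 ≠ 0 := pow_ne_zero _ h2
    have hden2 : a * u z₀ * (u z₀ + 1) ^ 2 ≠ 0 := by
      exact mul_ne_zero (mul_ne_zero ha0 h1) hden1
    rw [div_eq_div_iff hden1 hden2]
    field_simp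
    ring
  rw [hval, hφdef] at SP
  rw [one_sub_sq_phi (hure z₀ hz₀)] at SP
  rw [norm_div, norm_mul, norm_mul, norm_pow, norm_neg] at SP
  set A := ‖a‖ with hA
  set U := ‖u z₀‖ with hU
  set S := ‖u z₀ + 1‖ with hS
  set R := (u z₀).re with hR
  set D := ‖deriv h z₀‖ with hD
  set X := (1 - ‖z₀‖ ^ 2) with hX
  have hApos : 0 < A := norm_pos_iff.mpr ha0
  have hUpos : 0 < U := norm_pos_iff.mpr (hu0 z₀ hz₀)
  have hSpos : 0 < S := norm_pos_iff.mpr (hu1 z₀ hz₀)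
  have hRpos : 0 < R := hure z₀ hz₀
  have hRU : R ≤ U := Complex.re_le_norm _
  have hXpos : 0 ≤ X := by
    have := mem_disk.mp hz₀
    nlinarith [norm_nonneg z₀]
  have hDpos : 0 ≤ D := norm_nonneg _
  -- SP : X * (D / (A * U * S^2)) ≤ 4 * R / S^2
  have key : X * D ≤ 4 * R * A * U := by
    have h1 : X * (D / (A * U * S ^ 2)) * (A * U * S ^ 2) ≤ (4 * R / S ^ 2) * (A * U * S ^ 2) := by
      apply mul_le_mul_of_nonneg_right SP
      positivity
    have h2 : X * (D / (A * U * S ^ 2)) * (A * U * S ^ 2) = X * D := by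
      field_simp
    have h3 : (4 * R / S ^ 2) * (A * U * S ^ 2) = 4 * R * A * U := by
      field_simp
    rw [h2, h3] at h1
    exact h1
  have hU2 : U ^ 2 = ‖q z₀‖ := by
    rw [sq, hU, ← norm_mul, hudef]
    exact congrArg (‖·‖) (sq_cpow_half (hq0 z₀ hz₀))
  have hqle : ‖q z₀‖ ≤ 1 + ‖h z₀‖ / A := by
    have t1 : ‖(1:ℂ) - h z₀ / a‖ ≤ ‖(1:ℂ)‖ + ‖-(h z₀ / a)‖ := by
      rw [sub_eq_add_neg]
      exact norm_add_le _ _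
    rw [norm_one, norm_neg, norm_div] at t1
    exact t1
  have final : X * D ≤ (4 * A + 2) * (1 + ‖h z₀‖ ^ 2) := by
    have k1 : 4 * R * A * U ≤ 4 * A * U ^ 2 := by
      nlinarith [mul_le_mul_of_nonneg_left hRU (by positivity : (0:ℝ) ≤ 4 * A * U)]
    have k2 : 4 * A * U ^ 2 ≤ 4 * A + 4 * ‖h z₀‖ := by
      rw [hU2]
      have := mul_le_mul_of_nonneg_left hqle (by linarith : (0:ℝ) ≤ 4 * A)
      calc 4 * A * ‖q z₀‖ ≤ 4 * A * (1 + ‖h z₀‖ / A) := this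
        _ = 4 * A + 4 * ‖h z₀‖ := by field_simp
    nlinarith [sq_nonneg (‖h z₀‖ - 1),
        mul_nonneg (le_of_lt hApos) (sq_nonneg (‖h z₀‖))]
  exact final


end NormalAux

open NormalAux

theorem normal_of_starlike (h g : ℂ → ℂ)
    (hh : DifferentiableOn ℂ h 𝔻) (hg : DifferentiableOn ℂ g 𝔻)
    (hsp : ∀ z ∈ 𝔻, ‖deriv g z‖ < ‖deriv h z‖)
    (hω : ∃ c : ℝ, c < 1 ∧ ∀ z ∈ 𝔻, ‖deriv g z‖ ≤ c * ‖deriv h z‖)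
    (hinj : Set.InjOn h 𝔻) (h0 : h 0 = 0)
    (hstar : ∀ w ∈ h '' 𝔻, ∀ t : ℝ, t ∈ Set.Icc (0 : ℝ) 1 → (t : ℂ) * w ∈ h '' 𝔻) :
    harmNorm h g < ⊤ := by
  obtain ⟨c, hc1, hc⟩ := hω
  set c' : ℝ := max c 0 with hc'def
  have hc'1 : c' < 1 := max_lt hc1 zero_lt_one
  have hc'0 : 0 ≤ c' := le_max_right _ _
  have hcc : ∀ z ∈ 𝔻, ‖deriv g z‖ ≤ c' * ‖deriv h z‖ := by
    intro z hz
    exact le_trans (hc z hz)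
      (mul_le_mul_of_nonneg_right (le_max_left _ _) (norm_nonneg _))
  have h0mem : (0 : ℂ) ∈ 𝔻 := mem_ball_self one_pos
  have hne : ∀ z ∈ 𝔻, deriv h z ≠ 0 := by
    intro z hz e
    have := hsp z hz
    rw [e] at this
    simp at this
    exact absurd this (not_lt.mpr (norm_nonneg _))
  have hstrict : ∀ z ∈ 𝔻, HasStrictDerivAt h (deriv h z) z := by
    intro z hz
    have ha : AnalyticAt ℂ h z := hh.analyticAt (isOpen_disk.mem_nhds hz)
    have := ha.hasStrictFDerivAt.hasStrictDerivAt
    simpa [fderiv_apply_one_eq_deriv] using this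
  set Ω : Set ℂ := h '' 𝔻 with hΩdef
  set Hi : ℂ → ℂ := Function.invFunOn h 𝔻 with hHidef
  have hHi_mem : ∀ w ∈ Ω, Hi w ∈ 𝔻 := by
    rintro w ⟨z, hz, rfl⟩
    exact Function.invFunOn_mem ⟨z, hz, rfl⟩
  have hHi_eq : ∀ w ∈ Ω, h (Hi w) = w := by
    rintro w ⟨z, hz, rfl⟩
    exact Function.invFunOn_eq ⟨z, hz, rfl⟩
  have hHi_left : ∀ z ∈ 𝔻, Hi (h z) = z := by
    intro z hz
    exact hinj (Function.invFunOn_mem ⟨z, hz, rfl⟩) hz (Function.invFunOn_eq ⟨z, hz, rfl⟩)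
  have hHiDeriv : ∀ w ∈ Ω, HasDerivAt Hi (deriv h (Hi w))⁻¹ w := by
    intro w hw
    have hmem' := hHi_mem w hw
    have heq := hHi_eq w hw
    have hs := hstrict _ hmem'
    have hev : ∀ᶠ x in 𝓝 (Hi w), Hi (h x) = x :=
      (isOpen_disk.eventually_mem hmem').mono fun x hx => hHi_left x hx
    have := hs.to_local_left_inverse (hne _ hmem') hev
    rw [heq] at this
    exact this.hasDerivAt
  -- Ω is not all of ℂ
  have hΩne : Ω ≠ univ := by
    intro hU
    have hdiff : Differentiable ℂ Hi := fun w =>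
      (hHiDeriv w (by rw [hU]; exact mem_univ w)).differentiableAt
    have hbdd : Bornology.IsBounded (range Hi) := by
      apply (isBounded_ball (x := (0:ℂ)) (r := 1)).subset
      rintro _ ⟨w, rfl⟩
      exact hHi_mem w (by rw [hU]; exact mem_univ w)
    have heq2 : Hi (h (1/2 : ℂ)) = Hi (h 0) := hdiff.apply_eq_apply_of_bounded hbdd _ _
    have hhalf : (1/2 : ℂ) ∈ 𝔻 := by
      rw [mem_disk]
      simp
      norm_num
    rw [hHi_left _ hhalf, hHi_left _ h0mem] at heq2
    norm_num at heq2
  obtain ⟨a, ha⟩ := (Set.ne_univ_iff_exists_notMem Ω).mp hΩne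
  have h0Ω : (0 : ℂ) ∈ Ω := ⟨0, h0mem, h0⟩
  have ha0 : a ≠ 0 := fun e => ha (e ▸ h0Ω)
  -- ray condition
  have hray : ∀ z ∈ 𝔻, 1 - h z / a ∈ Complex.slitPlane := by
    intro z hz
    by_contra hcon
    rw [Complex.mem_slitPlane_iff] at hcon
    push_neg at hcon
    obtain ⟨hre, him⟩ := hcon
    set s : ℝ := (h z / a).re with hsdef
    have him' : (h z / a).im = 0 := by
      have : (1 - h z / a).im = -(h z / a).im := by simp
      rw [him] at this
      linarith
    have hs1 : 1 ≤ s := by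
      have : (1 - h z / a).re = 1 - s := by simp [hsdef]
      rw [this] at hre
      linarith
    have hzq : h z / a = (s : ℂ) := by
      apply Complex.ext
      · simp [hsdef]
      · simp [him']
    have hzs : h z = (s : ℂ) * a := by
      rw [← hzq]
      field_simp
    have hs0 : (0:ℝ) < s := by linarith
    have ht : (1/s : ℝ) ∈ Set.Icc (0:ℝ) 1 := ⟨by positivity, by rw [div_le_one hs0]; linarith⟩
    have hmem2 := hstar (h z) ⟨z, hz, rfl⟩ (1/s) ht
    have heq3 : ((1/s : ℝ) : ℂ) * h z = a := by
      rw [hzs]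
      have hsne : (s:ℂ) ≠ 0 := Complex.ofReal_ne_zero.mpr (ne_of_gt hs0)
      push_cast
      field_simp
    rw [heq3] at hmem2
    exact ha hmem2
  -- Step A : |g z - g 0| ≤ c' |h z|
  have hgb : ∀ z ∈ 𝔻, ‖g z - g 0‖ ≤ c' * ‖h z‖ := by
    intro z hz
    set w : ℂ := h z with hwdef
    set F : ℝ → ℂ := fun t => g (Hi ((t:ℂ) * w)) with hFdef
    set F' : ℝ → ℂ := fun t =>
      deriv g (Hi ((t:ℂ) * w)) * ((deriv h (Hi ((t:ℂ) * w)))⁻¹ * w) with hF'def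
    have hmemt : ∀ t ∈ Set.Icc (0:ℝ) 1, ((t:ℂ) * w) ∈ Ω := by
      intro t ht
      exact hstar w ⟨z, hz, rfl⟩ t ht
    have hFd : ∀ t ∈ Set.Icc (0:ℝ) 1, HasDerivAt F (F' t) t := by
      intro t ht
      have hw' := hmemt t ht
      have h1 : HasDerivAt (fun s : ℝ => (s:ℂ) * w) w t := by
        simpa using ((hasDerivAt_id ((t:ℂ))).mul_const w).comp_ofReal
      have h2 : HasDerivAt Hi (deriv h (Hi ((t:ℂ) * w)))⁻¹ ((t:ℂ) * w) := hHiDeriv _ hw'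
      have hzt : Hi ((t:ℂ) * w) ∈ 𝔻 := hHi_mem _ hw'
      have h3 : HasDerivAt g (deriv g (Hi ((t:ℂ) * w))) (Hi ((t:ℂ) * w)) :=
        (hg.differentiableAt (isOpen_disk.mem_nhds hzt)).hasDerivAt
      have h12 : HasDerivAt (fun s : ℝ => Hi ((s:ℂ) * w)) ((deriv h (Hi ((t:ℂ) * w)))⁻¹ * w) t :=
        HasDerivAt.comp (h₂ := Hi) t h2 h1
      exact h3.comp t h12
    have hbound : ∀ t ∈ Set.Icc (0:ℝ) 1, ‖F' t‖ ≤ c' * ‖w‖ := by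
      intro t ht
      have hw' := hmemt t ht
      have hzt : Hi ((t:ℂ) * w) ∈ 𝔻 := hHi_mem _ hw'
      have e1 : ‖F' t‖ = ‖deriv g (Hi ((t:ℂ) * w))‖ *
          ((‖deriv h (Hi ((t:ℂ) * w))‖)⁻¹ * ‖w‖) := by
        rw [hF'def]
        simp [norm_mul, norm_inv]
      rw [e1]
      have hpos : 0 < ‖deriv h (Hi ((t:ℂ) * w))‖ :=
        norm_pos_iff.mpr (hne _ hzt)
      have := hcc _ hzt
      rw [← mul_assoc]
      apply mul_le_mul_of_nonneg_right _ (norm_nonneg w)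
      rw [mul_inv_le_iff₀ hpos]
      exact this
    have key := (convex_Icc (0:ℝ) 1).norm_image_sub_le_of_norm_hasDerivWithin_le
      (fun t ht => (hFd t ht).hasDerivWithinAt) hbound
      (Set.left_mem_Icc.mpr zero_le_one) (Set.right_mem_Icc.mpr zero_le_one)
    have hF1 : F 1 = g z := by
      rw [hFdef]
      simp only [Complex.ofReal_one, one_mul]
      rw [hwdef, hHi_left z hz]
    have hF0 : F 0 = g 0 := by
      rw [hFdef]
      simp only [Complex.ofReal_zero, zero_mul]
      have hHi0 : Hi (0:ℂ) = 0 := by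
        conv_lhs => rw [← h0]
        exact hHi_left 0 h0mem
      rw [hHi0]
    rw [hF1, hF0] at key
    simpa using key
  -- Step B and final assembly
  set A : ℝ := ‖a‖ with hAdef
  set b : ℝ := ‖g 0‖ with hbdef
  set d1 : ℝ := 1 - c' with hd1def
  have hd1pos : 0 < d1 := by simp [hd1def]; linarith
  set KB : ℝ := 1 + 2 / d1 ^ 2 + 2 * b ^ 2 / d1 ^ 2 with hKBdef
  have hKBpos : 0 < KB := by positivity
  set M : ℝ := (1 + c') * ((4 * A + 2) * KB) with hMdef
  have hmain : ∀ z ∈ 𝔻, nQuot h g z ≤ M := by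
    intro z hz
    have hz' : ‖z‖ < 1 := mem_disk.mp hz
    set H : ℝ := ‖h z‖ with hHdef
    set Fv : ℝ := ‖harmMap h g z‖ with hFvdef
    have hHpos : 0 ≤ H := norm_nonneg _
    have hFvpos : 0 ≤ Fv := norm_nonneg _
    have e1 : ‖deriv g z‖ ≤ c' * ‖deriv h z‖ := hcc z hz
    have e2 : (1 - ‖z‖ ^ 2) * ‖deriv h z‖ ≤
        (4 * A + 2) * (1 + H ^ 2) := starlike_deriv_bound hh ha0 hray hz
    have e3 : ‖g z‖ ≤ b + c' * H := by
      calc ‖g z‖ = ‖g z - g 0 + g 0‖ := by ring_nf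
        _ ≤ ‖g z - g 0‖ + ‖g 0‖ := norm_add_le _ _
        _ ≤ c' * H + b := add_le_add (hgb z hz) le_rfl
        _ = b + c' * H := by ring
    have e4 : d1 * H - b ≤ Fv := by
      have t1 : ‖h z‖ - ‖(starRingEnd ℂ) (g z)‖ ≤
          ‖h z + (starRingEnd ℂ) (g z)‖ := by
        have := norm_add_le (h z + (starRingEnd ℂ) (g z)) (-((starRingEnd ℂ) (g z)))
        simp only [add_neg_cancel_right] at this
        rw [norm_neg] at this
        linarith
      rw [Complex.norm_conj] at t1
      have : harmMap h g z = h z + (starRingEnd ℂ) (g z) := rfl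
      rw [hFvdef, this]
      have := e3
      simp only [hd1def]
      nlinarith [t1]
    have hb0 : 0 ≤ b := norm_nonneg _
    have e5 : 1 + H ^ 2 ≤ KB * (1 + Fv ^ 2) := by
      have e4' : d1 * H ≤ Fv + b := by linarith
      have e6 : (d1*H)*(d1*H) ≤ (Fv+b)*(Fv+b) :=
        mul_le_mul e4' e4' (by positivity) (by linarith)
      have hd2 : (0:ℝ) < d1 ^ 2 := by positivity
      rw [hKBdef]
      have expand : (1 + 2/d1^2 + 2*b^2/d1^2) * (1+Fv^2) = ((d1^2+2+2*b^2)*(1+Fv^2))/d1^2 := by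
        field_simp
      rw [expand, le_div_iff₀ hd2]
      nlinarith [e6, sq_nonneg (Fv - b),
        mul_nonneg (mul_nonneg hb0 hb0) (mul_nonneg hFvpos hFvpos),
        mul_nonneg (mul_nonneg hd1pos.le hd1pos.le) (mul_nonneg hFvpos hFvpos)]
    have hXnonneg : 0 ≤ 1 - ‖z‖ ^ 2 := by nlinarith [norm_nonneg z]
    have hA0 : 0 ≤ A := norm_nonneg _
    have hden : (0:ℝ) < 1 + Fv ^ 2 := by positivity
    have hq : nQuot h g z = (1 - ‖z‖ ^ 2) *
        (‖deriv h z‖ + ‖deriv g z‖) / (1 + Fv ^ 2) := rfl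
    rw [hq, div_le_iff₀ hden]
    set X : ℝ := 1 - ‖z‖ ^ 2 with hXdef
    set Dh : ℝ := ‖deriv h z‖ with hDhdef
    set Dg : ℝ := ‖deriv g z‖ with hDgdef
    have hDh0 : 0 ≤ Dh := norm_nonneg _
    have n1 : X * (Dh + Dg) ≤ (1 + c') * (X * Dh) := by
      have := mul_le_mul_of_nonneg_left e1 hXnonneg
      nlinarith
    have n2 : (1 + c') * (X * Dh) ≤ (1 + c') * ((4*A+2) * (1 + H^2)) :=
      mul_le_mul_of_nonneg_left e2 (by linarith)
    have n3 : (1 + c') * ((4*A+2) * (1 + H^2)) ≤ (1 + c') * ((4*A+2) * (KB * (1 + Fv^2))) := by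
      apply mul_le_mul_of_nonneg_left _ (by linarith)
      apply mul_le_mul_of_nonneg_left e5 (by linarith)
    have n4 : (1 + c') * ((4*A+2) * (KB * (1 + Fv^2))) = M * (1 + Fv^2) := by
      rw [hMdef]; ring
    linarith
  rw [harmNorm]
  exact lt_of_le_of_lt (iSup₂_le fun z hz => ENNReal.ofReal_le_ofReal (hmain z hz))
    ENNReal.ofReal_lt_top
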